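/- Let K ≥ 1 be an integer and 0 < β < 1 with Kβ > 1, and let c : ℤ → ℝ be an even sequence satisfying c(n) = 0 for |n| > K, |c(n)·n| ≤ A for all n (for an absolute constant A), and ∑_{n ≥ 1} n·c(n)² = (1/(2π²)) log(Kβ) + O(1). Assume the prime number theorem for k: #{v ∈ 𝒮_k : deg v = n} = q^n/n + O(q^{n/2}). Then ∑_{v ∈ 𝒮_k} c(deg v)² (deg v)² |v|^{−1} = (1/(2π²)) log(Kβ) + O(1), with implied constants independent of K and β. -/

import Mathlib

open scoped BigOperators
open Filter

/-- Abstract data of a function field `k` in one variable with exact field of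
constants `𝔽_q`: the set of places with their degrees, the genus and the class
number. -/
structure FunctionFieldData where
  q : ℕ
  two_le_q : 2 ≤ q
  Place : Type
  degPlace : Place → ℕ
  degPlace_pos : ∀ v, 0 < degPlace v
  genus : ℕ
  classNumber : ℕ
  classNumber_pos : 0 < classNumber

namespace FunctionFieldData
/-- The absolute norm `|v| = q ^ deg v` of a place. -/
noncomputable def absNorm (k : FunctionFieldData) (v : k.Place) : ℝ :=
  (k.q : ℝ) ^ k.degPlace v
end FunctionFieldData

set_option maxHeartbeats 1000000 in
/-- let `K ≥ 1` and `0 < β < 1` with `Kβ > 1`, and let `c : ℤ → ℝ` be an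
even sequence with `c(n) = 0` for `|n| > K`, `|c(n)·n| ≤ A` for all `n`, and
`∑_{n ≥ 1} n·c(n)² = (1/(2π²)) log(Kβ) + O(1)` (these model the Fourier coefficients of
the degree-`K` Beurling–Selberg polynomials for `𝐈 = [−β/2, β/2]`).  Assuming the prime
number theorem for `k`, `#{v ∈ 𝒮_k : deg v = n} = q^n/n + O(q^{n/2})`, one has
`∑_{v ∈ 𝒮_k} c(deg v)² (deg v)² |v|^{−1} = (1/(2π²)) log(Kβ) + O(1)`, with implied
constants independent of `K` and `β`. -/
theorem statement14
    (k : FunctionFieldData)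
    (hfin : ∀ n : ℕ, Finite {v : k.Place // k.degPlace v = n})
    (P : ℝ)
    (hPNT : ∀ n : ℕ, 1 ≤ n →
      |(Nat.card {v : k.Place // k.degPlace v = n} : ℝ) - (k.q : ℝ) ^ n / n| ≤
        P * (k.q : ℝ) ^ ((n : ℝ) / 2))
    (A B : ℝ) (hA : 0 < A) (hB : 0 < B) :
    ∃ D : ℝ, 0 < D ∧
      ∀ (K : ℕ) (β : ℝ) (c : ℤ → ℝ),
        1 ≤ K → 0 < β → β < 1 → 1 < (K : ℝ) * β →
        (∀ n : ℤ, c (-n) = c n) →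
        (∀ n : ℤ, (K : ℤ) < |n| → c n = 0) →
        (∀ n : ℤ, |c n * n| ≤ A) →
        |(∑' n : ℕ, (n : ℝ) * (c n) ^ 2) - Real.log ((K : ℝ) * β) / (2 * Real.pi ^ 2)| ≤ B →
        |(∑' v : k.Place, (c (k.degPlace v)) ^ 2 * (k.degPlace v : ℝ) ^ 2 / k.absNorm v) -
            Real.log ((K : ℝ) * β) / (2 * Real.pi ^ 2)| ≤ D := by
  classical
  have hq2 : (2 : ℝ) ≤ (k.q : ℝ) := by exact_mod_cast k.two_le_q
  have hq0 : (0 : ℝ) < (k.q : ℝ) := by linarith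
  set s : ℝ := Real.sqrt (k.q : ℝ) with hs
  have hs43 : (4 : ℝ) / 3 ≤ s := by
    have h1 : Real.sqrt ((4/3 : ℝ) ^ 2) ≤ s := by
      apply Real.sqrt_le_sqrt; nlinarith
    rwa [Real.sqrt_sq (by norm_num)] at h1
  have hspos : 0 < s := by linarith
  have hs1 : 1 < s := by linarith
  have hsinv : s⁻¹ ≤ 3 / 4 := by
    rw [inv_le_comm₀ hspos (by norm_num)]
    linarith
  have hsinv0 : 0 ≤ s⁻¹ := by positivity
  have hP0 : 0 ≤ P := by
    have h1 := hPNT 1 le_rfl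
    have h3 : (0 : ℝ) < (k.q : ℝ) ^ (((1 : ℕ) : ℝ) / 2) := Real.rpow_pos_of_pos hq0 _
    nlinarith [abs_nonneg ((Nat.card {v : k.Place // k.degPlace v = 1} : ℝ) -
      (k.q : ℝ) ^ (1 : ℕ) / ((1 : ℕ) : ℝ))]
  refine ⟨B + 4 * A ^ 2 * P + 1, by positivity, ?_⟩
  intro K β c hK hβ0 hβ1 hKβ hev hvan hbd hmain
  set f : k.Place → ℝ :=
    fun v => (c (k.degPlace v)) ^ 2 * (k.degPlace v : ℝ) ^ 2 / k.absNorm v with hf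
  have hc0 : ∀ n : ℕ, K < n → c (n : ℤ) = 0 := by
    intro n hn
    apply hvan
    rw [abs_of_nonneg (by positivity)]
    exact_mod_cast hn
  have hsupp : (Function.support f).Finite := by
    have hsub : Function.support f ⊆ ⋃ n ∈ Finset.range (K + 1), {v | k.degPlace v = n} := by
      intro v hv
      by_cases h : k.degPlace v ≤ K
      · exact Set.mem_biUnion (Finset.mem_range.mpr (Nat.lt_succ_of_le h)) rfl
      · exfalso
        apply hv
        simp only [hf, hc0 (k.degPlace v) (lt_of_not_ge h)]
        ring
    refine Set.Finite.subset (Set.Finite.biUnion (Finset.range (K + 1)).finite_toSet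
      (fun n _ => ?_)) hsub
    exact @Set.toFinite _ _ (hfin n)
  have hsum : Summable f := summable_of_finite_support hsupp
  set e := Equiv.sigmaFiberEquiv k.degPlace with he
  have hsum2 : Summable (fun p : Σ n : ℕ, {v : k.Place // k.degPlace v = n} => f (e p)) :=
    (Equiv.summable_iff e).mpr hsum
  set g : ℕ → ℝ := fun n => (c (n : ℤ)) ^ 2 * (n : ℝ) ^ 2 / (k.q : ℝ) ^ n with hg
  set a : ℕ → ℝ := fun n => (Nat.card {v : k.Place // k.degPlace v = n} : ℝ) * g n with ha
  have hinner : ∀ n : ℕ, ∑' w : {v : k.Place // k.degPlace v = n}, f (e ⟨n, w⟩) = a n := by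
    intro n
    haveI := hfin n
    have h1 : ∀ w : {v : k.Place // k.degPlace v = n}, f (e ⟨n, w⟩) = g n := by
      rintro ⟨v, rfl⟩
      simp [hf, hg, he, Equiv.sigmaFiberEquiv, FunctionFieldData.absNorm]
    rw [tsum_congr h1, tsum_const, nsmul_eq_mul, ha]
  have hplace : (∑' v : k.Place, f v) = ∑' n : ℕ, a n := by
    rw [← Equiv.tsum_eq e f]
    rw [Summable.tsum_sigma' (fun n => by haveI := hfin n; exact Summable.of_finite) hsum2]
    exact tsum_congr hinner
  have haz : ∀ n ∉ Finset.range (K + 1), a n = 0 := by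
    intro n hn
    rw [Finset.mem_range, not_lt] at hn
    simp [ha, hg, hc0 n (by omega)]
  have htz : ∀ n ∉ Finset.range (K + 1), (n : ℝ) * (c (n : ℤ)) ^ 2 = 0 := by
    intro n hn
    rw [Finset.mem_range, not_lt] at hn
    simp [hc0 n (by omega)]
  have hS : (∑' n : ℕ, a n) = ∑ n ∈ Finset.range (K + 1), a n := tsum_eq_sum haz
  have hT : (∑' n : ℕ, (n : ℝ) * (c (n : ℤ)) ^ 2)
      = ∑ n ∈ Finset.range (K + 1), (n : ℝ) * (c (n : ℤ)) ^ 2 := tsum_eq_sum htz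
  have hterm : ∀ n ∈ Finset.range (K + 1),
      |a n - (n : ℝ) * (c (n : ℤ)) ^ 2| ≤ A ^ 2 * P * (s⁻¹) ^ n := by
    intro n _
    rcases Nat.eq_zero_or_pos n with rfl | hn
    · simp only [ha, hg, Nat.cast_zero, ne_eq, zero_pow, mul_zero, zero_mul, sub_zero,
        pow_zero, mul_one]
      simp
      positivity
    · have hn1 : (1 : ℕ) ≤ n := hn
      have hnR : (0 : ℝ) < (n : ℝ) := by exact_mod_cast hn
      have hqn : (0 : ℝ) < (k.q : ℝ) ^ n := by positivity
      have hsn : (0 : ℝ) < s ^ n := by positivity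
      have hrw : a n - (n : ℝ) * (c (n : ℤ)) ^ 2
          = ((Nat.card {v : k.Place // k.degPlace v = n} : ℝ) - (k.q : ℝ) ^ n / n) * g n := by
        simp only [ha, hg]
        field_simp
      have hcb : (c (n : ℤ)) ^ 2 * (n : ℝ) ^ 2 ≤ A ^ 2 := by
        have h1 := hbd (n : ℤ)
        have h2 : |c (n : ℤ) * (n : ℝ)| ≤ A := by exact_mod_cast h1
        have h3 := abs_le.mp h2
        nlinarith
      have hg_nonneg : 0 ≤ g n := by simp only [hg]; positivity
      have hgle : g n ≤ A ^ 2 / (k.q : ℝ) ^ n := by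
        simp only [hg]; gcongr
      have hsq : (k.q : ℝ) ^ ((n : ℝ) / 2) = s ^ n := by
        rw [hs, show ((n : ℝ) / 2) = (1 / 2) * (n : ℕ) by ring,
          Real.rpow_mul hq0.le, Real.rpow_natCast, ← Real.sqrt_eq_rpow]
      have hqs : (k.q : ℝ) ^ n = (s ^ n) ^ 2 := by
        rw [← Real.sq_sqrt hq0.le, ← pow_mul, ← pow_mul, Nat.mul_comm]
      calc |a n - (n : ℝ) * (c (n : ℤ)) ^ 2|
          = |(Nat.card {v : k.Place // k.degPlace v = n} : ℝ) - (k.q : ℝ) ^ n / n| * g n := by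
            rw [hrw, abs_mul, abs_of_nonneg hg_nonneg]
        _ ≤ (P * (k.q : ℝ) ^ ((n : ℝ) / 2)) * (A ^ 2 / (k.q : ℝ) ^ n) :=
            mul_le_mul (hPNT n hn1) hgle hg_nonneg (by positivity)
        _ = A ^ 2 * P * (s⁻¹) ^ n := by
            rw [hsq, hqs, inv_pow]
            field_simp
  have hgeo : ∑ n ∈ Finset.range (K + 1), (s⁻¹) ^ n ≤ 4 := by
    have hlt : s⁻¹ < 1 := by linarith
    have h1 : ∑ n ∈ Finset.range (K + 1), (s⁻¹) ^ n ≤ ∑' n : ℕ, (s⁻¹) ^ n :=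
      Summable.sum_le_tsum _ (fun i _ => by positivity) (summable_geometric_of_lt_one hsinv0 hlt)
    rw [tsum_geometric_of_lt_one hsinv0 hlt] at h1
    have h2 : (1 : ℝ) / 4 ≤ 1 - s⁻¹ := by linarith
    have h3 : (1 - s⁻¹)⁻¹ ≤ ((1 : ℝ) / 4)⁻¹ := by
      gcongr
    linarith [h3.trans_eq (by norm_num : ((1 : ℝ) / 4)⁻¹ = 4)]
  have hdiff : |(∑ n ∈ Finset.range (K + 1), a n)
      - ∑ n ∈ Finset.range (K + 1), (n : ℝ) * (c (n : ℤ)) ^ 2| ≤ 4 * A ^ 2 * P := by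
    rw [← Finset.sum_sub_distrib]
    calc |∑ n ∈ Finset.range (K + 1), (a n - (n : ℝ) * (c (n : ℤ)) ^ 2)|
        ≤ ∑ n ∈ Finset.range (K + 1), |a n - (n : ℝ) * (c (n : ℤ)) ^ 2| :=
          Finset.abs_sum_le_sum_abs _ _
      _ ≤ ∑ n ∈ Finset.range (K + 1), A ^ 2 * P * (s⁻¹) ^ n := Finset.sum_le_sum hterm
      _ = A ^ 2 * P * ∑ n ∈ Finset.range (K + 1), (s⁻¹) ^ n := by rw [← Finset.mul_sum]
      _ ≤ A ^ 2 * P * 4 := by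
          apply mul_le_mul_of_nonneg_left hgeo (by positivity)
      _ = 4 * A ^ 2 * P := by ring
  rw [hplace, hS]
  rw [hT] at hmain
  calc |(∑ n ∈ Finset.range (K + 1), a n) - Real.log ((K : ℝ) * β) / (2 * Real.pi ^ 2)|
      ≤ |(∑ n ∈ Finset.range (K + 1), a n)
          - ∑ n ∈ Finset.range (K + 1), (n : ℝ) * (c (n : ℤ)) ^ 2|
        + |(∑ n ∈ Finset.range (K + 1), (n : ℝ) * (c (n : ℤ)) ^ 2)
          - Real.log ((K : ℝ) * β) / (2 * Real.pi ^ 2)| := abs_sub_le _ _ _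
    _ ≤ 4 * A ^ 2 * P + B := add_le_add hdiff hmain
    _ ≤ B + 4 * A ^ 2 * P + 1 := by linarith
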